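/- Fix real numbers y_1 < y_2 < ⋯ < y_n. Then ∫ Δ(x) dx over the interlacing region {x ∈ ℝ^{n−1} : y_1 ≤ x_1 ≤ y_2 ≤ x_2 ≤ ⋯ ≤ x_{n−1} ≤ y_n} equals Δ(y)/(n−1)!, where Δ denotes the Vandermonde determinant in the respective number of variables. -/

import Mathlib

open MeasureTheory

lemma det_pow_diff (m : ℕ) (y : Fin (m + 1) → ℝ) :
    Matrix.det (show Matrix (Fin m) (Fin m) ℝ from fun i j =>
        y i.succ ^ ((j : ℕ) + 1) - y i.castSucc ^ ((j : ℕ) + 1))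
      = ∏ i : Fin (m + 1), ∏ j ∈ Finset.Ioi i, (y j - y i) := by
  set D : Matrix (Fin (m + 1)) (Fin (m + 1)) ℝ :=
    Matrix.of fun i j => Fin.cases (y 0 ^ (j : ℕ))
      (fun i' => y i'.succ ^ (j : ℕ) - y i'.castSucc ^ (j : ℕ)) i with hD
  have h1 : Matrix.det (Matrix.vandermonde y) = Matrix.det D := by
    apply Matrix.det_eq_of_forall_row_eq_smul_add_pred (fun _ => (1 : ℝ))
    · intro j; simp [hD, Matrix.vandermonde]
    · intro i j; simp [hD, Matrix.vandermonde]
  have h2 : Matrix.det D = Matrix.det (D.submatrix Fin.succ Fin.succ) := by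
    rw [Matrix.det_succ_column_zero, Fin.sum_univ_succ]
    simp [hD, Fin.zero_succAbove]
  have h3 : D.submatrix Fin.succ Fin.succ = (show Matrix (Fin m) (Fin m) ℝ from fun i j =>
      y i.succ ^ ((j : ℕ) + 1) - y i.castSucc ^ ((j : ℕ) + 1)) := by
    ext i j
    simp [hD, Matrix.submatrix]
  rw [← h3, ← h2, ← h1, Matrix.det_vandermonde]

theorem dixon_anderson_volume (m : ℕ) (y : Fin (m + 1) → ℝ) (hy : StrictMono y) :
    (∫ x in {x : Fin m → ℝ | ∀ i : Fin m, y i.castSucc ≤ x i ∧ x i ≤ y i.succ},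
        ∏ i : Fin m, ∏ j ∈ Finset.Ioi i, (x j - x i))
      = (∏ i : Fin (m + 1), ∏ j ∈ Finset.Ioi i, (y j - y i)) / (Nat.factorial m) := by
  set a : Fin m → ℝ := fun i => y i.castSucc with ha
  set b : Fin m → ℝ := fun i => y i.succ with hb
  have hab : ∀ i, a i ≤ b i := fun i => (hy (Fin.castSucc_lt_succ (i := i))).le
  have hset : {x : Fin m → ℝ | ∀ i : Fin m, y i.castSucc ≤ x i ∧ x i ≤ y i.succ}
      = Set.Icc a b := by
    ext x
    simp only [Set.mem_setOf_eq, Set.mem_Icc, Pi.le_def, ← forall_and, ha, hb]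
  rw [hset]
  -- rewrite integrand as a sum over permutations
  have hint : ∀ x : Fin m → ℝ, (∏ i : Fin m, ∏ j ∈ Finset.Ioi i, (x j - x i))
      = ∑ σ : Equiv.Perm (Fin m),
          ((Equiv.Perm.sign σ : ℤ) : ℝ) * ∏ i : Fin m, x i ^ ((σ i : ℕ)) := by
    intro x
    rw [← Matrix.det_vandermonde x, ← Matrix.det_transpose, Matrix.det_apply']
    refine Finset.sum_congr rfl fun σ _ => ?_
    simp [Matrix.vandermonde]
  simp_rw [hint]
  rw [integral_finset_sum]
  · have key : ∀ σ : Equiv.Perm (Fin m), (∫ x in Set.Icc a b,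
        ∏ i : Fin m, x i ^ ((σ i : ℕ)))
        = ∏ i : Fin m, (b i ^ ((σ i : ℕ) + 1) - a i ^ ((σ i : ℕ) + 1)) / ((σ i : ℕ) + 1) := by
      intro σ
      rw [← integral_indicator measurableSet_Icc]
      have hind : (Set.Icc a b).indicator (fun x => ∏ i : Fin m, x i ^ ((σ i : ℕ)))
          = fun x => ∏ i : Fin m,
              (Set.Icc (a i) (b i)).indicator (fun t => t ^ ((σ i : ℕ))) (x i) := by
        funext x
        by_cases h : x ∈ Set.Icc a b
        · rw [Set.indicator_of_mem h]
          exact Finset.prod_congr rfl fun i _ =>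
            (Set.indicator_of_mem (Set.mem_Icc.mpr ⟨h.1 i, h.2 i⟩) _).symm
        · rw [Set.indicator_of_notMem h]
          rw [Set.mem_Icc, Pi.le_def, Pi.le_def, ← forall_and] at h
          push_neg at h
          obtain ⟨i, hi⟩ := h
          refine (Finset.prod_eq_zero (Finset.mem_univ i) ?_).symm
          apply Set.indicator_of_notMem
          rw [Set.mem_Icc]
          exact fun hc => (hi hc.1).not_ge hc.2
      rw [hind]
      beta_reduce
      rw [volume_pi, integral_fintype_prod_eq_prod (ι := Fin m)
        (fun i t => (Set.Icc (a i) (b i)).indicator (fun u => u ^ ((σ i : ℕ))) t)]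
      refine Finset.prod_congr rfl fun i _ => ?_
      rw [integral_indicator measurableSet_Icc, integral_Icc_eq_integral_Ioc,
        ← intervalIntegral.integral_of_le (hab i), integral_pow]
    simp_rw [integral_const_mul, key]
    have hdet : ∑ σ : Equiv.Perm (Fin m), ((Equiv.Perm.sign σ : ℤ) : ℝ) *
        ∏ i : Fin m, (b i ^ ((σ i : ℕ) + 1) - a i ^ ((σ i : ℕ) + 1)) / ((σ i : ℕ) + 1)
        = Matrix.det (Matrix.of fun i j : Fin m =>
            (b i ^ ((j : ℕ) + 1) - a i ^ ((j : ℕ) + 1)) / ((j : ℕ) + 1)) := by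
      rw [← Matrix.det_transpose, Matrix.det_apply']
      refine Finset.sum_congr rfl fun σ _ => ?_
      simp
    rw [hdet]
    have hsc : (Matrix.of fun i j : Fin m =>
        (b i ^ ((j : ℕ) + 1) - a i ^ ((j : ℕ) + 1)) / ((j : ℕ) + 1))
        = Matrix.of fun i j : Fin m => (((j : ℕ) + 1 : ℝ))⁻¹ *
            (b i ^ ((j : ℕ) + 1) - a i ^ ((j : ℕ) + 1)) := by
      ext i j; rw [Matrix.of_apply, Matrix.of_apply, div_eq_inv_mul]
    rw [hsc, Matrix.det_mul_row (fun j : Fin m => (((j : ℕ) + 1 : ℝ))⁻¹)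
      (show Matrix (Fin m) (Fin m) ℝ from fun i j => b i ^ ((j : ℕ) + 1) - a i ^ ((j : ℕ) + 1))]
    simp only [ha, hb]
    rw [det_pow_diff m y]
    have hfac : (∏ j : Fin m, (((j : ℕ) : ℝ) + 1)⁻¹) = ((Nat.factorial m : ℝ))⁻¹ := by
      rw [Finset.prod_inv_distrib]
      congr 1
      have hnat : (∏ j : Fin m, ((j : ℕ) + 1)) = Nat.factorial m := by
        rw [Fin.prod_univ_eq_prod_range fun t => t + 1]
        exact Finset.prod_range_add_one_eq_factorial m
      rw [← hnat]
      push_cast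
      ring
    rw [hfac, inv_mul_eq_div]
  · intro σ _
    apply ContinuousOn.integrableOn_compact isCompact_Icc
    exact (Continuous.continuousOn (by continuity))
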